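/- arXiv:2203.01722 — 2 statements merged into one kernel-verified Lean document; each statement's English description precedes it below -/
import Mathlib

section
/- Let Q̂_1,…,Q̂_n with Q̂_i ∈ ℝ^{k_i × k}, k = ∏ k_i. The following are equivalent for a given probability vector p ∈ ℝ^k: (i) (Q̂_1 * ⋯ * Q̂_n) p = (Q̂_1 p) ⊗ ⋯ ⊗ (Q̂_n p); (ii) H R_k^{(n)} p = H p^{⊗ n}, where H := ∏_{i=1}^n (I_{k^{i-1}} ⊗ Q̂_i) and R_k^{(n)} has columns (δ_k^j)^{⊗ n}. -/
open Matrix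

noncomputable section

/-- A probability vector: nonnegative entries summing to `1`. -/
def ProbVec {m : Type*} [Fintype m] (p : m → ℝ) : Prop :=
  (∀ i, 0 ≤ p i) ∧ ∑ i, p i = 1

/-- Iterated Khatri–Rao product of `Q̂ i ∈ ℝ^{k_i × k}` (`k = ∏ k_i`, realized as the
index set `K = ∏ i, Fin (k i)`). -/
def KRn {n : ℕ} {k : Fin n → ℕ}
    (Q : ∀ i, Matrix (Fin (k i)) (∀ i, Fin (k i)) ℝ) :
    Matrix (∀ i, Fin (k i)) (∀ i, Fin (k i)) ℝ :=
  Matrix.of fun g j => ∏ i, Q i (g i) j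

/-- The matrix `H = ∏_{i=1}^n (I_{k^{i-1}} ⊗ Q̂_i)` in closed form. -/
def Hmat {n : ℕ} {k : Fin n → ℕ}
    (Q : ∀ i, Matrix (Fin (k i)) (∀ i, Fin (k i)) ℝ) :
    Matrix (∀ i, Fin (k i)) (Fin n → (∀ i, Fin (k i))) ℝ :=
  Matrix.of fun g f => ∏ i, Q i (g i) (f i)

/-- The matrix `R_k^{(n)}` whose `j`-th column is `(δ_k^j)^{⊗ n}`. -/
def Rkn (n : ℕ) (k : Fin n → ℕ) :
    Matrix (Fin n → (∀ i, Fin (k i))) (∀ i, Fin (k i)) ℝ :=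
  Matrix.of fun f j => ∏ _i : Fin n, (if f _i = j then (1 : ℝ) else 0)

/-- **Consistency condition.**  For a probability vector `p ∈ ℝ^k` the following are
equivalent: (i) `(Q̂_1 * ⋯ * Q̂_n) p = (Q̂_1 p) ⊗ ⋯ ⊗ (Q̂_n p)`;
(ii) `H R_k^{(n)} p = H p^{⊗ n}`. -/
theorem consistency_iff (n : ℕ) (k : Fin n → ℕ)
    (Q : ∀ i, Matrix (Fin (k i)) (∀ i, Fin (k i)) ℝ)
    (p : (∀ i, Fin (k i)) → ℝ) (hp : ProbVec p) :
    ((KRn Q).mulVec p = fun g => ∏ i, ((Q i).mulVec p) (g i)) ↔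
      (Hmat Q * Rkn n k).mulVec p =
        (Hmat Q).mulVec (fun f : Fin n → (∀ i, Fin (k i)) => ∏ i, p (f i)) := by
  have h1 : (Hmat Q * Rkn n k).mulVec p = (KRn Q).mulVec p := by
    funext g
    simp only [Matrix.mulVec, dotProduct, Matrix.mul_apply, Hmat, Rkn, KRn, Matrix.of_apply]
    refine Finset.sum_congr rfl fun j _ => ?_
    congr 1
    have : ∀ f : Fin n → (∀ i, Fin (k i)),
        (∏ i : Fin n, (if f i = j then (1 : ℝ) else 0)) =
          if f = (fun _ => j) then (1 : ℝ) else 0 := by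
      intro f
      rw [Finset.prod_boole]
      congr 1
      simp [funext_iff]
    calc (∑ f : Fin n → (∀ i, Fin (k i)),
          (∏ i, Q i (g i) (f i)) * ∏ i : Fin n, (if f i = j then (1 : ℝ) else 0))
        = ∑ f : Fin n → (∀ i, Fin (k i)),
          (∏ i, Q i (g i) (f i)) * (if f = (fun _ => j) then (1 : ℝ) else 0) := by
          refine Finset.sum_congr rfl fun f _ => ?_; rw [this f]
      _ = ∏ i, Q i (g i) j := by
          rw [Finset.sum_eq_single (fun _ => j)]
          · simp
          · intro f _ hf; simp [hf]
          · intro h; exact absurd (Finset.mem_univ _) h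
  have h2 : (Hmat Q).mulVec (fun f : Fin n → (∀ i, Fin (k i)) => ∏ i, p (f i)) =
      fun g => ∏ i, ((Q i).mulVec p) (g i) := by
    funext g
    simp only [Matrix.mulVec, dotProduct, Hmat, Matrix.of_apply]
    rw [Finset.prod_univ_sum]
    refine Finset.sum_congr ?_ fun f _ => ?_
    · ext f; simp [Fintype.mem_piFinset]
    · rw [← Finset.prod_mul_distrib]
  rw [h1, h2]
end
end

section
/- Let Q̂_1,…,Q̂_n be column-stochastic matrices with Q̂_i ∈ ℝ^{k_i × k}, k = ∏ k_i. Suppose that n−1 of them are constant-column, i.e., there exist probability vectors v_{i_1},…,v_{i_{n-1}} with Q̂_{i_j} = 1_k^T ⊗ v_{i_j} (every column of Q̂_{i_j} equals v_{i_j}). Then for every probability vector p ∈ ℝ^k, (Q̂_1 * ⋯ * Q̂_n) p = (Q̂_1 p) ⊗ ⋯ ⊗ (Q̂_n p). -/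
open Matrix

noncomputable section

/-- A column-stochastic matrix: all columns are probability vectors. -/
def ColStochastic {m n : Type*} [Fintype m] (A : Matrix m n ℝ) : Prop :=
  (∀ r j, 0 ≤ A r j) ∧ ∀ j, ∑ r, A r j = 1

/-- **Sufficient consistency condition.**  If the `Q̂_i` are column-stochastic and
`n−1` of them are constant-column (each column of `Q̂_{i_j}` equals a fixed probability
vector `v_{i_j}`, i.e. `Q̂_{i_j} = 1_kᵀ ⊗ v_{i_j}`), then for every probability vector
`p`, `(Q̂_1 * ⋯ * Q̂_n) p = (Q̂_1 p) ⊗ ⋯ ⊗ (Q̂_n p)`. -/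
theorem consistency_of_constant_columns (n : ℕ) (k : Fin n → ℕ)
    (Q : ∀ i, Matrix (Fin (k i)) (∀ i, Fin (k i)) ℝ)
    (hQ : ∀ i, ColStochastic (Q i))
    (hconst : ∃ i₀ : Fin n, ∀ i, i ≠ i₀ →
      ∃ v : Fin (k i) → ℝ, ProbVec v ∧ ∀ a j, Q i a j = v a)
    (p : (∀ i, Fin (k i)) → ℝ) (hp : ProbVec p) :
    (KRn Q).mulVec p = fun g => ∏ i, ((Q i).mulVec p) (g i) := by
  classical
  obtain ⟨i₀, hc⟩ := hconst
  choose v hv hQv using hc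
  funext g
  set w : Fin n → ℝ := fun i => if h : i = i₀ then 1 else v i h (g i) with hw
  have hwi : ∀ i ∈ Finset.univ.erase i₀, ∀ j, Q i (g i) j = w i := by
    intro i hi j
    have h := Finset.ne_of_mem_erase hi
    simp [hw, h, hQv i h (g i) j]
  have hprod : ∀ j, ∏ i, Q i (g i) j
      = (∏ i ∈ Finset.univ.erase i₀, w i) * Q i₀ (g i₀) j := by
    intro j
    rw [← Finset.mul_prod_erase _ _ (Finset.mem_univ i₀),
      Finset.prod_congr rfl (fun i hi => hwi i hi j)]
    ring
  have hrhs : ∀ i ∈ Finset.univ.erase i₀, ((Q i).mulVec p) (g i) = w i := by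
    intro i hi
    have h := Finset.ne_of_mem_erase hi
    simp only [mulVec, dotProduct]
    rw [Finset.sum_congr rfl (fun j _ => by rw [hQv i h (g i) j]),
      ← Finset.mul_sum, hp.2, mul_one]
    simp [hw, h]
  calc (KRn Q).mulVec p g
      = ∑ j, (∏ i, Q i (g i) j) * p j := rfl
    _ = ∑ j, ((∏ i ∈ Finset.univ.erase i₀, w i) * Q i₀ (g i₀) j) * p j := by
        refine Finset.sum_congr rfl fun j _ => by rw [hprod j]
    _ = (∏ i ∈ Finset.univ.erase i₀, w i) * ∑ j, Q i₀ (g i₀) j * p j := by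
        rw [Finset.mul_sum]; exact Finset.sum_congr rfl fun j _ => mul_assoc _ _ _
    _ = (∏ i ∈ Finset.univ.erase i₀, ((Q i).mulVec p) (g i))
          * ((Q i₀).mulVec p) (g i₀) := by
        rw [Finset.prod_congr rfl hrhs]; rfl
    _ = ∏ i, ((Q i).mulVec p) (g i) := by
        rw [← Finset.mul_prod_erase _ _ (Finset.mem_univ i₀)]; ring
end
end
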